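/- Let K ⊂ ℂ be compact with K ⊂ {y : |y| ≤ b} for some b > 0. Then for every x = x₁ + ix₂ ∈ ℂ, ∫_K e^{−Re((x−y)²)}/|x−y| dy ≤ 2πe + 2√π · b · e^{(|x₂| + b)²}. -/

import Mathlib

open MeasureTheory Set Metric Complex


noncomputable def wfun : ℝ → ℝ := (Set.Icc (-1:ℝ) 1).indicator (fun t => |t| ^ (-(1/2) : ℝ))

lemma wfun_nonneg (t : ℝ) : 0 ≤ wfun t := by
  unfold wfun
  apply Set.indicator_nonneg
  intro t _
  positivity

lemma wfun_integrable : Integrable wfun := by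
  unfold wfun
  rw [integrable_indicator_iff measurableSet_Icc]
  have h01 : IntegrableOn (fun t : ℝ => |t| ^ (-(1/2) : ℝ)) (Set.Icc 0 1) := by
    have h := (intervalIntegral.intervalIntegrable_rpow' (a := 0) (b := 1)
      (r := (-(1/2) : ℝ)) (by norm_num)).1
    rw [show Set.Icc (0:ℝ) 1 = Set.Ioc (0:ℝ) 1 ∪ {0} by
      rw [Set.union_comm, ← Set.Icc_union_Ioc_eq_Icc le_rfl zero_le_one, Set.Icc_self]]
    apply IntegrableOn.union
    · exact h.congr_fun (fun t ht => by rw [_root_.abs_of_nonneg ht.1.le]) measurableSet_Ioc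
    · simp [IntegrableOn]
  have hneg : IntegrableOn (fun t : ℝ => |t| ^ (-(1/2) : ℝ)) (Set.Icc (-1) 0) := by
    rw [← integrable_indicator_iff measurableSet_Icc]
    have h2 : Integrable ((Set.Icc (0:ℝ) 1).indicator (fun t : ℝ => |t| ^ (-(1/2) : ℝ))) :=
      (integrable_indicator_iff measurableSet_Icc).2 h01
    have h3 := h2.comp_neg
    convert h3 using 1
    · rfl
    funext t
    show _ = (Set.Icc (0:ℝ) 1).indicator (fun t : ℝ => |t| ^ (-(1/2) : ℝ)) (-t)
    rw [Set.indicator_apply, Set.indicator_apply]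
    have : t ∈ Set.Icc (-1:ℝ) 0 ↔ -t ∈ Set.Icc (0:ℝ) 1 := by
      simp only [Set.mem_Icc]; constructor <;> intro h <;> constructor <;> linarith [h.1, h.2]
    rw [abs_neg]
    by_cases ht : t ∈ Set.Icc (-1:ℝ) 0
    · rw [if_pos ht, if_pos (this.1 ht)]
    · rw [if_neg ht, if_neg (fun h => ht (this.2 h))]
  have : Set.Icc (-1:ℝ) 1 = Set.Icc (-1:ℝ) 0 ∪ Set.Icc 0 1 :=
    (Set.Icc_union_Icc_eq_Icc (by norm_num) zero_le_one).symm
  rw [this]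
  exact hneg.union h01



lemma re_eq_zero_null : volume {y : ℂ | y.re = 0} = 0 := by
  have h : {y : ℂ | y.re = 0} = (LinearMap.ker Complex.reLm : Set ℂ) := by
    ext y; simp [LinearMap.mem_ker]
  rw [h]
  apply Measure.addHaar_submodule
  intro htop
  have : Complex.reLm 1 = (0:ℝ) := by
    rw [LinearMap.ker_eq_top] at htop
    exact congrFun (congrArg _ htop) 1
  simp at this

lemma im_eq_zero_null : volume {y : ℂ | y.im = 0} = 0 := by
  have h : {y : ℂ | y.im = 0} = (LinearMap.ker Complex.imLm : Set ℂ) := by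
    ext y; simp [LinearMap.mem_ker]
  rw [h]
  apply Measure.addHaar_submodule
  intro htop
  have : Complex.imLm Complex.I = (0:ℝ) := by
    rw [LinearMap.ker_eq_top] at htop
    exact congrFun (congrArg _ htop) Complex.I
  simp at this

lemma integrableOn_inv_norm_ball : IntegrableOn (fun y : ℂ => ‖y‖⁻¹) (Metric.ball (0:ℂ) 1) := by
  have hH : Integrable (fun p : ℝ × ℝ => wfun p.1 * wfun p.2) := by
    rw [MeasureTheory.Measure.volume_eq_prod]
    exact wfun_integrable.mul_prod wfun_integrable
  have hh : Integrable (fun y : ℂ => wfun y.re * wfun y.im) :=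
    (Complex.volume_preserving_equiv_real_prod.integrable_comp_emb
      Complex.measurableEquivRealProd.measurableEmbedding).2 hH
  have hre : ∀ᵐ y : ℂ ∂volume, y.re ≠ 0 := by
    rw [ae_iff]; simpa using re_eq_zero_null
  have him : ∀ᵐ y : ℂ ∂volume, y.im ≠ 0 := by
    rw [ae_iff]; simpa using im_eq_zero_null
  apply Integrable.mono' hh.integrableOn
    ((measurable_norm.inv).aestronglyMeasurable)
  filter_upwards [ae_restrict_mem measurableSet_ball, ae_restrict_of_ae hre,
    ae_restrict_of_ae him] with y hy hyre hyim
  have hylt : ‖y‖ < 1 := by simpa [dist_eq_norm] using hy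
  have h1 : |y.re| ≤ 1 := le_trans (Complex.abs_re_le_norm y) hylt.le
  have h2 : |y.im| ≤ 1 := le_trans (Complex.abs_im_le_norm y) hylt.le
  have hre0 : 0 < |y.re| := abs_pos.2 hyre
  have him0 : 0 < |y.im| := abs_pos.2 hyim
  have hw1 : wfun y.re = (Real.sqrt |y.re|)⁻¹ := by
    unfold wfun
    rw [Set.indicator_of_mem (by rw [Set.mem_Icc]; constructor <;> cases abs_le.1 h1 <;> linarith)]
    rw [show (-(1/2) : ℝ) = -(1/2) from rfl, Real.rpow_neg (abs_nonneg _), Real.sqrt_eq_rpow]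
  have hw2 : wfun y.im = (Real.sqrt |y.im|)⁻¹ := by
    unfold wfun
    rw [Set.indicator_of_mem (by rw [Set.mem_Icc]; constructor <;> cases abs_le.1 h2 <;> linarith)]
    rw [Real.rpow_neg (abs_nonneg _), Real.sqrt_eq_rpow]
  rw [hw1, hw2, ← mul_inv]
  rw [Real.norm_eq_abs, Pi.inv_apply, _root_.abs_of_nonneg (inv_nonneg.2 (norm_nonneg _))]
  apply inv_anti₀
  · positivity
  · rw [← Real.sqrt_mul (abs_nonneg _)]
    have : ‖y‖ = Real.sqrt (y.re * y.re + y.im * y.im) := by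
      rw [Complex.norm_def, Complex.normSq_apply]
    rw [this]
    apply Real.sqrt_le_sqrt
    nlinarith [sq_nonneg (|y.re| - |y.im|), _root_.sq_abs y.re, _root_.sq_abs y.im, abs_nonneg y.re,
      abs_nonneg y.im, mul_pos hre0 him0]

lemma integral_inv_norm_ball : ∫ y in Metric.ball (0:ℂ) 1, ‖y‖⁻¹ = 2 * Real.pi := by
  have key := Complex.integral_comp_polarCoord_symm
    ((Metric.ball (0:ℂ) 1).indicator fun y => ‖y‖⁻¹)
  rw [← integral_indicator measurableSet_ball, ← key]
  have hcongr : Set.EqOn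
      (fun p : ℝ × ℝ => p.1 • ((Metric.ball (0:ℂ) 1).indicator (fun y => ‖y‖⁻¹)
        (Complex.polarCoord.symm p)))
      ((Set.Ioo (0:ℝ) 1 ×ˢ Set.Ioo (-Real.pi) Real.pi).indicator (fun _ => (1:ℝ)))
      polarCoord.target := by
    intro p hp
    have hp1 : 0 < p.1 := hp.1
    have habs : ‖Complex.polarCoord.symm p‖ = p.1 := by
      rw [Complex.norm_polarCoord_symm, abs_of_pos hp1]
    by_cases h : p.1 < 1
    · have hmem : Complex.polarCoord.symm p ∈ Metric.ball (0:ℂ) 1 := by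
        rw [Metric.mem_ball, dist_zero_right, habs]; exact h
      have hmem' : p ∈ Set.Ioo (0:ℝ) 1 ×ˢ Set.Ioo (-Real.pi) Real.pi :=
        ⟨⟨hp1, h⟩, hp.2⟩
      simp only [Set.indicator_of_mem hmem, Set.indicator_of_mem hmem', habs, smul_eq_mul]
      field_simp
    · have hmem : Complex.polarCoord.symm p ∉ Metric.ball (0:ℂ) 1 := by
        rw [Metric.mem_ball, dist_zero_right, habs]; exact h
      have hmem' : p ∉ Set.Ioo (0:ℝ) 1 ×ˢ Set.Ioo (-Real.pi) Real.pi := by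
        intro hc; exact h hc.1.2
      simp only []
      rw [Set.indicator_of_notMem hmem, Set.indicator_of_notMem hmem', smul_zero]
  rw [setIntegral_congr_fun polarCoord.open_target.measurableSet hcongr]
  rw [integral_indicator (measurableSet_Ioo.prod measurableSet_Ioo)]
  rw [Measure.restrict_restrict (measurableSet_Ioo.prod measurableSet_Ioo)]
  have hsub : (Set.Ioo (0:ℝ) 1 ×ˢ Set.Ioo (-Real.pi) Real.pi) ∩ polarCoord.target
      = Set.Ioo (0:ℝ) 1 ×ˢ Set.Ioo (-Real.pi) Real.pi := by
    apply Set.inter_eq_self_of_subset_left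
    intro p hp
    exact ⟨hp.1.1, hp.2⟩
  rw [hsub, setIntegral_const]
  rw [measureReal_def, Measure.volume_eq_prod, Measure.prod_prod, Real.volume_Ioo, Real.volume_Ioo]
  rw [← ENNReal.ofReal_mul (by norm_num)]
  rw [ENNReal.toReal_ofReal (by nlinarith [Real.pi_pos])]
  rw [smul_eq_mul, mul_one]
  ring





lemma indicator_ball_eq (x : ℂ) : (Metric.ball x 1).indicator (fun y => ‖x - y‖⁻¹)
    = fun y => (Metric.ball (0:ℂ) 1).indicator (fun z => ‖z‖⁻¹) (x - y) := by
  funext y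
  by_cases h : y ∈ Metric.ball x 1
  · have h' : x - y ∈ Metric.ball (0:ℂ) 1 := by
      rw [Metric.mem_ball, dist_zero_right]
      rw [Metric.mem_ball, dist_eq_norm] at h
      rwa [norm_sub_rev]
    rw [Set.indicator_of_mem h, Set.indicator_of_mem h']
  · have h' : x - y ∉ Metric.ball (0:ℂ) 1 := by
      rw [Metric.mem_ball, dist_zero_right]
      rw [Metric.mem_ball, dist_eq_norm] at h
      rwa [norm_sub_rev]
    rw [Set.indicator_of_notMem h, Set.indicator_of_notMem h']

lemma integrableOn_inv_norm_ball' (x : ℂ) :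
    IntegrableOn (fun y : ℂ => ‖x - y‖⁻¹) (Metric.ball x 1) := by
  rw [← integrable_indicator_iff measurableSet_ball, indicator_ball_eq]
  exact ((integrable_indicator_iff measurableSet_ball).2 integrableOn_inv_norm_ball).comp_sub_left x

lemma integral_inv_norm_ball' (x : ℂ) :
    ∫ y in Metric.ball x 1, ‖x - y‖⁻¹ = 2 * Real.pi := by
  rw [← integral_indicator measurableSet_ball, indicator_ball_eq,
    integral_sub_left_eq_self _ _ x, integral_indicator measurableSet_ball]
  exact integral_inv_norm_ball

lemma measurableSet_strip (b : ℝ) : MeasurableSet {y : ℂ | |y.im| ≤ b} :=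
  (isClosed_le (continuous_abs.comp Complex.continuous_im) continuous_const).measurableSet

lemma gauss_integrable (x₁ : ℝ) : Integrable (fun t : ℝ => Real.exp (-(x₁ - t)^2)) := by
  have h0 : Integrable (fun t : ℝ => Real.exp (-t^2)) := by
    have := integrable_exp_neg_mul_sq (b := 1) one_pos
    simpa using this
  exact h0.comp_sub_left x₁

lemma gauss_integral (x₁ : ℝ) : ∫ t : ℝ, Real.exp (-(x₁ - t)^2) = Real.sqrt Real.pi := by
  rw [integral_sub_left_eq_self (fun t : ℝ => Real.exp (-t^2)) volume x₁]
  have := integral_gaussian 1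
  simpa using this

lemma strip_indicator_eq (x₁ b c : ℝ) :
    ({y : ℂ | |y.im| ≤ b}).indicator (fun y : ℂ => Real.exp (-(x₁ - y.re)^2) * c)
    = fun y : ℂ => Real.exp (-(x₁ - y.re)^2) * (Set.Icc (-b) b).indicator (fun _ => c) y.im := by
  funext y
  by_cases h : |y.im| ≤ b
  · rw [Set.indicator_of_mem (show y ∈ {y : ℂ | |y.im| ≤ b} from h),
      Set.indicator_of_mem (show y.im ∈ Set.Icc (-b) b from Set.mem_Icc.2 (abs_le.1 h))]
  · rw [Set.indicator_of_notMem (show y ∉ {y : ℂ | |y.im| ≤ b} from h),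
      Set.indicator_of_notMem
        (show y.im ∉ Set.Icc (-b) b from fun hc => h (abs_le.2 (Set.mem_Icc.1 hc))), mul_zero]

lemma strip_integrable (x₁ b c : ℝ) :
    IntegrableOn (fun y : ℂ => Real.exp (-(x₁ - y.re)^2) * c) {y : ℂ | |y.im| ≤ b} := by
  rw [← integrable_indicator_iff (measurableSet_strip b), strip_indicator_eq]
  have hv : Integrable ((Set.Icc (-b) b).indicator (fun _ : ℝ => c)) := by
    rw [integrable_indicator_iff measurableSet_Icc]
    exact integrableOn_const measure_Icc_lt_top.ne
  have hH : Integrable (fun p : ℝ × ℝ =>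
      Real.exp (-(x₁ - p.1)^2) * (Set.Icc (-b) b).indicator (fun _ => c) p.2) := by
    rw [MeasureTheory.Measure.volume_eq_prod]
    exact (gauss_integrable x₁).mul_prod hv
  exact (Complex.volume_preserving_equiv_real_prod.integrable_comp_emb
    Complex.measurableEquivRealProd.measurableEmbedding).2 hH

lemma strip_integral (x₁ b c : ℝ) (hb : 0 ≤ b) :
    ∫ y in {y : ℂ | |y.im| ≤ b}, Real.exp (-(x₁ - y.re)^2) * c
    = Real.sqrt Real.pi * (2 * b * c) := by
  rw [← integral_indicator (measurableSet_strip b), strip_indicator_eq]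
  have hcomp : ∫ y : ℂ, Real.exp (-(x₁ - y.re)^2) * (Set.Icc (-b) b).indicator (fun _ => c) y.im
      = ∫ p : ℝ × ℝ, Real.exp (-(x₁ - p.1)^2) * (Set.Icc (-b) b).indicator (fun _ => c) p.2 := by
    exact (Complex.volume_preserving_equiv_real_prod.integral_comp
      Complex.measurableEquivRealProd.measurableEmbedding
      (fun p : ℝ × ℝ => Real.exp (-(x₁ - p.1)^2)
        * (Set.Icc (-b) b).indicator (fun _ => c) p.2))
  rw [hcomp, MeasureTheory.Measure.volume_eq_prod,
    integral_prod_mul (f := fun t : ℝ => Real.exp (-(x₁ - t)^2))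
      (g := (Set.Icc (-b) b).indicator fun _ => c), gauss_integral,
    integral_indicator measurableSet_Icc, setIntegral_const, measureReal_def, Real.volume_Icc, smul_eq_mul,
    ENNReal.toReal_ofReal (by linarith)]
  ring








/-- for `K ⊆ {|y| ≤ b}` compact, `b > 0`, and `x = x₁ + i x₂ ∈ ℂ`,
`∫_K e^{-Re((x-y)²)}/|x-y| dy ≤ 2πe + 2√π · b · e^{(|x₂| + b)²}`. -/
theorem stmt4 (K : Set ℂ) (hK : IsCompact K) (b : ℝ) (hb : 0 < b)
    (hKb : K ⊆ Metric.closedBall 0 b) (x : ℂ) :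
    ∫ y in K, Real.exp (-((x - y) ^ 2).re) / ‖x - y‖ ≤
      2 * Real.pi * Real.exp 1 +
        2 * Real.sqrt Real.pi * b * Real.exp ((|x.im| + b) ^ 2) := by
  have hRHS : 0 ≤ 2 * Real.pi * Real.exp 1 +
      2 * Real.sqrt Real.pi * b * Real.exp ((|x.im| + b) ^ 2) := by
    have := Real.pi_pos
    positivity
  set f : ℂ → ℝ := fun y => Real.exp (-((x - y) ^ 2).re) / ‖x - y‖ with hf
  by_cases hint : IntegrableOn f K volume
  swap
  · rw [integral_undef hint]; exact hRHS
  have hsplit := integral_inter_add_diff (s := K) (t := Metric.ball x 1)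
    measurableSet_ball hint
  rw [← hsplit]
  set c := Real.exp ((|x.im| + b) ^ 2) with hc
  set g : ℂ → ℝ := fun y => Real.exp (-(x.re - y.re)^2) * c with hg
  have hKB_meas : MeasurableSet (K ∩ Metric.ball x 1) :=
    hK.measurableSet.inter measurableSet_ball
  have hKD_meas : MeasurableSet (K \ Metric.ball x 1) :=
    hK.measurableSet.diff measurableSet_ball
  have him : ∀ y ∈ K, |y.im| ≤ b := by
    intro y hy
    have := hKb hy
    rw [Metric.mem_closedBall, dist_zero_right] at this
    exact le_trans (Complex.abs_im_le_norm y) this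
  have part1 : ∫ y in K ∩ Metric.ball x 1, f y ≤ 2 * Real.pi * Real.exp 1 := by
    have hmaj : IntegrableOn (fun y : ℂ => Real.exp 1 * ‖x - y‖⁻¹) (Metric.ball x 1) :=
      (integrableOn_inv_norm_ball' x).const_mul _
    have step1 : ∫ y in K ∩ Metric.ball x 1, f y
        ≤ ∫ y in K ∩ Metric.ball x 1, Real.exp 1 * ‖x - y‖⁻¹ := by
      apply setIntegral_mono_on (hint.mono_set Set.inter_subset_left)
        (hmaj.mono_set Set.inter_subset_right) hKB_meas
      intro y hy
      have hball : ‖x - y‖ < 1 := by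
        have := hy.2
        rw [Metric.mem_ball, dist_eq_norm] at this
        rwa [norm_sub_rev]
      have hexp : Real.exp (-((x - y) ^ 2).re) ≤ Real.exp 1 := by
        apply Real.exp_le_exp.2
        rw [pow_two, Complex.mul_re]
        have h1 : |(x - y).im| ≤ 1 := le_trans (Complex.abs_im_le_norm _) hball.le
        have h2 := abs_le.1 h1
        nlinarith [mul_self_nonneg (x - y).re]
      calc f y = Real.exp (-((x - y) ^ 2).re) * ‖x - y‖⁻¹ := div_eq_mul_inv _ _
        _ ≤ Real.exp 1 * ‖x - y‖⁻¹ :=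
          mul_le_mul_of_nonneg_right hexp (inv_nonneg.2 (norm_nonneg _))
    have step2 : ∫ y in K ∩ Metric.ball x 1, Real.exp 1 * ‖x - y‖⁻¹
        ≤ ∫ y in Metric.ball x 1, Real.exp 1 * ‖x - y‖⁻¹ := by
      apply setIntegral_mono_set hmaj
      · filter_upwards with y
        positivity
      · exact (Set.inter_subset_right).eventuallyLE
    have step3 : ∫ y in Metric.ball x 1, Real.exp 1 * ‖x - y‖⁻¹ = 2 * Real.pi * Real.exp 1 := by
      rw [integral_const_mul, integral_inv_norm_ball' x]
      ring
    linarith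
  have part2 : ∫ y in K \ Metric.ball x 1, f y ≤ 2 * Real.sqrt Real.pi * b * c := by
    have hgS : IntegrableOn g {y : ℂ | |y.im| ≤ b} := strip_integrable x.re b c
    have hsub : K \ Metric.ball x 1 ⊆ {y : ℂ | |y.im| ≤ b} := fun y hy => him y hy.1
    have step1 : ∫ y in K \ Metric.ball x 1, f y ≤ ∫ y in K \ Metric.ball x 1, g y := by
      apply setIntegral_mono_on (hint.mono_set Set.diff_subset) (hgS.mono_set hsub) hKD_meas
      intro y hy
      have hnorm : 1 ≤ ‖x - y‖ := by
        have := hy.2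
        rw [Metric.mem_ball, dist_eq_norm, not_lt] at this
        rwa [norm_sub_rev]
      have h1 : f y ≤ Real.exp (-((x - y) ^ 2).re) :=
        div_le_self (Real.exp_nonneg _) hnorm
      have h2 : Real.exp (-((x - y) ^ 2).re) ≤ g y := by
        show Real.exp (-((x - y) ^ 2).re)
          ≤ Real.exp (-(x.re - y.re) ^ 2) * c
        rw [hc, ← Real.exp_add]
        apply Real.exp_le_exp.2
        rw [pow_two, Complex.mul_re]
        have h3 : |y.im| ≤ b := him y hy.1
        have h4 : |x.im - y.im| ≤ |x.im| + b := le_trans (abs_sub _ _) (by linarith)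
        have h5 := abs_le.1 h4
        have h6 : (x - y).re = x.re - y.re := by simp [Complex.sub_re]
        have h7 : (x - y).im = x.im - y.im := by simp [Complex.sub_im]
        rw [h6, h7]
        nlinarith [abs_nonneg x.im]
      linarith
    have step2 : ∫ y in K \ Metric.ball x 1, g y ≤ ∫ y in {y : ℂ | |y.im| ≤ b}, g y := by
      apply setIntegral_mono_set hgS
      · filter_upwards with y
        rw [hg]
        positivity
      · exact hsub.eventuallyLE
    have step3 : ∫ y in {y : ℂ | |y.im| ≤ b}, g y = Real.sqrt Real.pi * (2 * b * c) :=
      strip_integral x.re b c hb.le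
    rw [step3] at step2
    have : Real.sqrt Real.pi * (2 * b * c) = 2 * Real.sqrt Real.pi * b * c := by ring
    linarith
  exact add_le_add part1 part2
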